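/- arXiv:0907.2595 — 5 statements merged into one kernel-verified Lean document; each statement's English description precedes it below -/
import Mathlib

section
/- In a cobweb poset Π determined by a sequence F of positive integers (levels Φ_k are antichains of size F_k, and every element of Φ_r is below every element of Φ_s whenever r < s), for any x ∈ Φ_r and y ∈ Φ_s with r < s, the Möbius function satisfies μ(x,y) = (-1)^{s-r} · ∏_{k=r+1}^{s-1} (F_k - 1). -/
lemma cobweb_key (F : ℕ → ℕ) (r : ℕ) : ∀ s, r < s →
    (1 : ℤ) + ∑ k ∈ Finset.Ico (r+1) s,
      (F k : ℤ) * ((-1:ℤ)^(k-r) * ∏ j ∈ Finset.Ico (r+1) k, ((F j:ℤ)-1))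
    = -((-1:ℤ)^(s-r) * ∏ k ∈ Finset.Ico (r+1) s, ((F k:ℤ)-1)) := by
  intro s hs
  induction s, hs using Nat.le_induction with
  | base =>
      simp [Nat.succ_sub (le_refl r)]
  | succ s hs ih =>
      rw [Finset.sum_Ico_succ_top (by omega), Finset.prod_Ico_succ_top (by omega)]
      have h1 : s + 1 - r = (s - r) + 1 := by omega
      rw [← add_assoc, ih, h1, pow_succ]
      ring

/-- In a cobweb poset determined by a positive sequence `F` (levels `Φ k` are
antichains of size `F k`, and `x < y` iff the level of `x` is below the level
of `y`), the Möbius function satisfies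
`μ(x,y) = (-1)^(s-r) * ∏_{k=r+1}^{s-1} (F k - 1)` for `x` of rank `r`, `y`
of rank `s`, `r < s`. -/
theorem cobweb_mobius_formula {α : Type*} [PartialOrder α] [LocallyFiniteOrder α]
    (F : ℕ → ℕ) (hF : ∀ k, 0 < F k)
    (lvl : α → ℕ) (Φ : ℕ → Finset α)
    (hord : ∀ x y : α, x < y ↔ lvl x < lvl y)
    (hΦ : ∀ (k : ℕ) (x : α), x ∈ Φ k ↔ lvl x = k)
    (hcard : ∀ k : ℕ, (Φ k).card = F k)
    (mu : α → α → ℤ)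
    (hmu_refl : ∀ x : α, mu x x = 1)
    (hmu_rec : ∀ x y : α, x < y → mu x y = -∑ z ∈ Finset.Ico x y, mu x z)
    (x y : α) (r s : ℕ) (hx : lvl x = r) (hy : lvl y = s) (hrs : r < s) :
    mu x y = (-1 : ℤ) ^ (s - r) * ∏ k ∈ Finset.Ico (r + 1) s, ((F k : ℤ) - 1) := by
  classical
  have main : ∀ s : ℕ, ∀ y : α, lvl y = s → r < s →
      mu x y = (-1 : ℤ) ^ (s - r) * ∏ k ∈ Finset.Ico (r + 1) s, ((F k : ℤ) - 1) := by
    intro s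
    induction s using Nat.strong_induction_on with
    | _ s ih =>
      intro y hy hrs
      have hxy : x < y := (hord x y).2 (by omega)
      rw [hmu_rec x y hxy]
      have hdecomp : Finset.Ico x y = insert x ((Finset.Ico (r+1) s).biUnion Φ) := by
        ext z
        simp only [Finset.mem_Ico, Finset.mem_insert, Finset.mem_biUnion, hΦ]
        constructor
        · rintro ⟨hxz, hzy⟩
          rcases eq_or_lt_of_le hxz with h | h
          · exact Or.inl h.symm
          · exact Or.inr ⟨lvl z, ⟨by have := (hord x z).1 h; omega,
              by have := (hord z y).1 hzy; omega⟩, rfl⟩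
        · rintro (rfl | ⟨k, ⟨hk1, hk2⟩, hk3⟩)
          · exact ⟨le_refl _, hxy⟩
          · exact ⟨le_of_lt ((hord x z).2 (by omega)), (hord z y).2 (by omega)⟩
      have hxnot : x ∉ (Finset.Ico (r+1) s).biUnion Φ := by
        simp only [Finset.mem_biUnion, Finset.mem_Ico, hΦ]
        rintro ⟨k, ⟨hk1, _⟩, hk3⟩; omega
      have hdisj : ∀ k ∈ Finset.Ico (r+1) s, ∀ j ∈ Finset.Ico (r+1) s, k ≠ j →
          Disjoint (Φ k) (Φ j) := by
        intro k _ j _ hkj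
        refine Finset.disjoint_left.2 fun z hzk hzj => ?_
        rw [hΦ] at hzk hzj; omega
      rw [hdecomp, Finset.sum_insert hxnot, Finset.sum_biUnion hdisj, hmu_refl]
      have hsum : ∀ k ∈ Finset.Ico (r+1) s, ∑ z ∈ Φ k, mu x z =
          (F k : ℤ) * ((-1:ℤ)^(k-r) * ∏ j ∈ Finset.Ico (r+1) k, ((F j:ℤ)-1)) := by
        intro k hk
        rw [Finset.mem_Ico] at hk
        rw [Finset.sum_congr rfl (fun z hz => ih k hk.2 z ((hΦ k z).1 hz) (by omega)),
          Finset.sum_const, hcard, nsmul_eq_mul]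
      rw [Finset.sum_congr rfl hsum, cobweb_key F r s hrs, neg_neg]
  exact main s y hy hrs
end

section
/- Let F be a positive-integer sequence with F_0 = 1 and let Π be the corresponding cobweb poset with unique minimal element 0. Then for any x ∈ Π of rank r ≥ 1, μ(0,x) = (-1)^r ∏_{k=1}^{r-1}(F_k - 1), and hence the r-th Whitney number of the first kind w_r(Π) = ∑_{x: rank(x)=r} μ(0,x) equals F_r · (-1)^r ∏_{k=1}^{r-1}(F_k - 1). -/
/-- For a cobweb poset with `F 0 = 1` (unique minimal element `z₀` of rank `0`):
for every `x` of rank `r ≥ 1`, `μ(z₀,x) = (-1)^r ∏_{k=1}^{r-1}(F k - 1)`, and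
hence the `r`-th Whitney number of the first kind
`w_r = ∑_{rank x = r} μ(z₀,x)` equals `F r * (-1)^r ∏_{k=1}^{r-1}(F k - 1)`. -/
theorem cobweb_whitney_first_kind {α : Type*} [PartialOrder α] [LocallyFiniteOrder α]
    (F : ℕ → ℕ) (hF : ∀ k, 0 < F k) (hF0 : F 0 = 1)
    (lvl : α → ℕ) (Φ : ℕ → Finset α)
    (hord : ∀ x y : α, x < y ↔ lvl x < lvl y)
    (hΦ : ∀ (k : ℕ) (x : α), x ∈ Φ k ↔ lvl x = k)
    (hcard : ∀ k : ℕ, (Φ k).card = F k)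
    (mu : α → α → ℤ)
    (hmu_refl : ∀ x : α, mu x x = 1)
    (hmu_rec : ∀ x y : α, x < y → mu x y = -∑ z ∈ Finset.Ico x y, mu x z)
    (z₀ : α) (hz₀ : z₀ ∈ Φ 0)
    (r : ℕ) (hr : 1 ≤ r) :
    (∀ x : α, lvl x = r →
        mu z₀ x = (-1 : ℤ) ^ r * ∏ k ∈ Finset.Ico 1 r, ((F k : ℤ) - 1)) ∧
      ∑ x ∈ Φ r, mu z₀ x =
        (F r : ℤ) * ((-1 : ℤ) ^ r * ∏ k ∈ Finset.Ico 1 r, ((F k : ℤ) - 1)) := by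
  classical
  set g : ℕ → ℤ := fun r => (-1 : ℤ) ^ r * ∏ k ∈ Finset.Ico 1 r, ((F k : ℤ) - 1) with hg
  have hlz₀ : lvl z₀ = 0 := (hΦ 0 z₀).1 hz₀
  have hΦ0 : Φ 0 = {z₀} := by
    have h1 : (Φ 0).card = 1 := by rw [hcard, hF0]
    obtain ⟨a, ha⟩ := Finset.card_eq_one.1 h1
    rw [ha] at hz₀ ⊢
    rw [Finset.mem_singleton] at hz₀
    rw [hz₀]
  have arith : ∀ n, 1 ≤ n → (-∑ k ∈ Finset.range n, (F k : ℤ) * g k) = g n := by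
    intro n hn
    induction n, hn using Nat.le_induction with
    | base =>
      simp [hg, hF0]
    | succ n hn ih =>
      rw [Finset.sum_range_succ, neg_add, ih]
      have hgsucc : g (n + 1) = (1 - (F n : ℤ)) * g n := by
        simp only [hg]
        rw [Finset.prod_Ico_succ_top hn, pow_succ]
        ring
      rw [hgsucc]; ring
  have key : ∀ r, ∀ x : α, lvl x = r → mu z₀ x = g r := by
    intro r
    induction r using Nat.strong_induction_on with
    | _ r ih =>
      intro x hx
      rcases Nat.eq_zero_or_pos r with h0 | hpos
      · subst h0
        have hxz : x ∈ Φ 0 := (hΦ 0 x).2 hx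
        rw [hΦ0, Finset.mem_singleton] at hxz
        subst hxz
        simp [hg, hmu_refl]
      · have hlt : z₀ < x := (hord z₀ x).2 (by omega)
        have hIco : Finset.Ico z₀ x = (Finset.range r).biUnion Φ := by
          ext z
          simp only [Finset.mem_Ico, Finset.mem_biUnion, Finset.mem_range]
          constructor
          · rintro ⟨h1, h2⟩
            exact ⟨lvl z, by rw [← hx]; exact (hord z x).1 h2, (hΦ _ z).2 rfl⟩
          · rintro ⟨k, hk, hz⟩
            have hlz : lvl z = k := (hΦ k z).1 hz
            have h2 : z < x := (hord z x).2 (by omega)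
            rcases Nat.eq_zero_or_pos k with hk0 | hk1
            · subst hk0
              rw [hΦ0, Finset.mem_singleton] at hz
              subst hz; exact ⟨le_refl _, h2⟩
            · exact ⟨le_of_lt ((hord z₀ z).2 (by omega)), h2⟩
        have hdisj : (↑(Finset.range r) : Set ℕ).PairwiseDisjoint Φ := by
          intro i _ j _ hij
          exact Finset.disjoint_left.2 fun z hzi hzj =>
            hij (by rw [← (hΦ i z).1 hzi, (hΦ j z).1 hzj])
        have hsum : mu z₀ x = -∑ k ∈ Finset.range r, ∑ z ∈ Φ k, mu z₀ z := by
          rw [hmu_rec z₀ x hlt, hIco, Finset.sum_biUnion hdisj]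
        have hconst : ∀ k ∈ Finset.range r, ∑ z ∈ Φ k, mu z₀ z = (F k : ℤ) * g k := by
          intro k hk
          rw [Finset.sum_congr rfl fun z hz => ih k (Finset.mem_range.1 hk) z ((hΦ k z).1 hz)]
          rw [Finset.sum_const, ← hcard, nsmul_eq_mul]
        rw [hsum, Finset.sum_congr rfl hconst, arith r hpos]
  refine ⟨fun x hx => key r x hx, ?_⟩
  rw [Finset.sum_congr rfl fun z hz => key r z ((hΦ r z).1 hz),
    Finset.sum_const, ← hcard, nsmul_eq_mul]
end

section
/- Let F be a positive-integer sequence with F_0 = 1 and let P_n be the finite cobweb poset on levels 0 through n. The characteristic polynomial χ_{P_n}(t) = ∑_{x ∈ P_n} μ(0,x) t^{n - rank(x)} equals ∑_{k=0}^{n} (-1)^k F_k t^{n-k} ∏_{r=1}^{k-1}(F_r - 1) (where the empty product is 1). -/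
/-- Auxiliary: the value of the Möbius function at level `k`. -/
def cobwebM (F : ℕ → ℕ) (k : ℕ) : ℤ :=
  (-1 : ℤ) ^ k * ∏ r ∈ Finset.Ico 1 k, ((F r : ℤ) - 1)

lemma cobwebM_sum (F : ℕ → ℕ) (hF0 : F 0 = 1) :
    ∀ k, ∑ j ∈ Finset.range (k + 1), (F j : ℤ) * cobwebM F j = -cobwebM F (k + 1) := by
  intro k
  induction k with
  | zero => simp [cobwebM, hF0]
  | succ k ih =>
    rw [Finset.sum_range_succ, ih]
    have h1 : cobwebM F (k + 2) = -((F (k + 1) : ℤ) - 1) * cobwebM F (k + 1) := by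
      unfold cobwebM
      rw [Finset.prod_Ico_succ_top (by omega : 1 ≤ k + 1)]
      ring
    rw [h1]; ring

/-- Characteristic polynomial of the finite cobweb poset `P_n` (levels `0,…,n`,
`F 0 = 1`, unique minimal element `z₀`):
`χ(t) = ∑_{x} μ(z₀,x) t^(n - rank x) = ∑_{k=0}^{n} (-1)^k F_k t^(n-k) ∏_{r=1}^{k-1}(F_r - 1)`. -/
theorem cobweb_characteristic_polynomial {α : Type*} [PartialOrder α] [Fintype α]
    [LocallyFiniteOrder α]
    (F : ℕ → ℕ) (hF : ∀ k, 0 < F k) (hF0 : F 0 = 1)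
    (n : ℕ)
    (lvl : α → ℕ) (Φ : ℕ → Finset α)
    (hlvl_le : ∀ x : α, lvl x ≤ n)
    (hord : ∀ x y : α, x < y ↔ lvl x < lvl y)
    (hΦ : ∀ (k : ℕ) (x : α), x ∈ Φ k ↔ lvl x = k)
    (hcard : ∀ k : ℕ, k ≤ n → (Φ k).card = F k)
    (mu : α → α → ℤ)
    (hmu_refl : ∀ x : α, mu x x = 1)
    (hmu_rec : ∀ x y : α, x < y → mu x y = -∑ z ∈ Finset.Ico x y, mu x z)
    (z₀ : α) (hz₀ : z₀ ∈ Φ 0)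
    (t : ℤ) :
    ∑ x : α, mu z₀ x * t ^ (n - lvl x) =
      ∑ k ∈ Finset.range (n + 1),
        (-1 : ℤ) ^ k * (F k : ℤ) * t ^ (n - k) *
          ∏ r ∈ Finset.Ico 1 k, ((F r : ℤ) - 1) := by
  have hlvlz₀ : lvl z₀ = 0 := (hΦ 0 z₀).mp hz₀
  -- uniqueness at level 0
  have huniq : ∀ z : α, lvl z = 0 → z = z₀ := by
    intro z hz
    have hc : (Φ 0).card = 1 := by rw [hcard 0 (Nat.zero_le n), hF0]
    obtain ⟨a, ha⟩ := Finset.card_eq_one.mp hc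
    have h1 : z ∈ Φ 0 := (hΦ 0 z).mpr hz
    rw [ha, Finset.mem_singleton] at h1 hz₀
    rw [h1, hz₀]
  -- Φ as fibers
  have hfib : ∀ k, Φ k = Finset.univ.filter (fun z => lvl z = k) := by
    intro k; ext z; simp [hΦ]
  -- mu value by level
  have hmu : ∀ m, ∀ x : α, lvl x = m → mu z₀ x = cobwebM F m := by
    intro m
    induction m using Nat.strong_induction_on with
    | _ m ih =>
      intro x hx
      rcases Nat.eq_zero_or_pos m with hm | hm
      · subst hm
        have := huniq x hx
        subst this
        simp [hmu_refl, cobwebM]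
      · have hlt : z₀ < x := (hord z₀ x).mpr (by omega)
        rw [hmu_rec z₀ x hlt]
        have hIco : Finset.Ico z₀ x = Finset.univ.filter (fun z => lvl z < m) := by
          ext z
          simp only [Finset.mem_Ico, Finset.mem_filter, Finset.mem_univ, true_and]
          constructor
          · rintro ⟨_, h2⟩
            have := (hord z x).mp h2
            omega
          · intro h
            refine ⟨?_, (hord z x).mpr (by omega)⟩
            rcases Nat.eq_zero_or_pos (lvl z) with h0 | h0
            · exact le_of_eq (huniq z h0).symm
            · exact le_of_lt ((hord z₀ z).mpr (by omega))
        rw [hIco]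
        have hsplit : ∑ z ∈ Finset.univ.filter (fun z => lvl z < m), mu z₀ z
            = ∑ j ∈ Finset.range m, ∑ z ∈ (Finset.univ.filter
                (fun z => lvl z < m)).filter (fun z => lvl z = j), mu z₀ z := by
          rw [Finset.sum_fiberwise_of_maps_to]
          intro z hz
          simp only [Finset.mem_filter] at hz
          exact Finset.mem_range.mpr hz.2
        rw [hsplit]
        have hinner : ∀ j ∈ Finset.range m,
            ∑ z ∈ (Finset.univ.filter (fun z => lvl z < m)).filter
              (fun z => lvl z = j), mu z₀ z = (F j : ℤ) * cobwebM F j := by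
          intro j hj
          rw [Finset.mem_range] at hj
          have hset : (Finset.univ.filter (fun z => lvl z < m)).filter
              (fun z => lvl z = j) = Φ j := by
            rw [hfib j, Finset.filter_filter]
            apply Finset.filter_congr
            intro z _
            constructor
            · exact fun h => h.2
            · exact fun h => ⟨by omega, h⟩
          rw [hset]
          have : ∀ z ∈ Φ j, mu z₀ z = cobwebM F j := fun z hz =>
            ih j hj z ((hΦ j z).mp hz)
          rw [Finset.sum_congr rfl this, Finset.sum_const, nsmul_eq_mul,
            hcard j (by have := hlvl_le x; omega)]
        rw [Finset.sum_congr rfl hinner]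
        obtain ⟨m', rfl⟩ := Nat.exists_eq_succ_of_ne_zero (by omega : m ≠ 0)
        rw [cobwebM_sum F hF0 m']
        ring
  -- now the main sum
  calc ∑ x : α, mu z₀ x * t ^ (n - lvl x)
      = ∑ k ∈ Finset.range (n + 1), ∑ x ∈ Finset.univ.filter
          (fun z => lvl z = k), mu z₀ x * t ^ (n - lvl x) := by
        rw [Finset.sum_fiberwise_of_maps_to]
        intro x _
        exact Finset.mem_range.mpr (by have := hlvl_le x; omega)
    _ = ∑ k ∈ Finset.range (n + 1),
          (-1 : ℤ) ^ k * (F k : ℤ) * t ^ (n - k) *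
            ∏ r ∈ Finset.Ico 1 k, ((F r : ℤ) - 1) := by
        apply Finset.sum_congr rfl
        intro k hk
        rw [Finset.mem_range] at hk
        have : ∀ x ∈ Finset.univ.filter (fun z => lvl z = k),
            mu z₀ x * t ^ (n - lvl x) = cobwebM F k * t ^ (n - k) := by
          intro x hx
          simp only [Finset.mem_filter] at hx
          rw [hmu k x hx.2, hx.2]
        rw [Finset.sum_congr rfl this, Finset.sum_const, nsmul_eq_mul,
          ← hfib k, hcard k (by omega : k ≤ n)]
        unfold cobwebM
        push_cast
        ring
end

section
/- In a cobweb poset, the convolution inverse of the ζ function in the incidence algebra is the function μ given by μ(x,y) = [x = y] · 1 + [rank(y) > rank(x)] · (-1)^{rank(y)-rank(x)} · ∏_{i=rank(x)+1}^{rank(y)-1}(F_i - 1); i.e., ∑_{x ≤ z ≤ y} μ(x,z) = [x = y] for all x ≤ y. -/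
open Finset

/-- The explicit Möbius function of a cobweb poset:
`μ(x,y) = [x = y] + [rank y > rank x] (-1)^(rank y - rank x) ∏_{i=rank x+1}^{rank y-1}(F i - 1)`. -/
noncomputable def cobwebMu {α : Type*} [DecidableEq α] (F : ℕ → ℕ) (lvl : α → ℕ)
    (x y : α) : ℤ :=
  if x = y then 1
  else if lvl x < lvl y then
    (-1 : ℤ) ^ (lvl y - lvl x) * ∏ i ∈ Finset.Ico (lvl x + 1) (lvl y), ((F i : ℤ) - 1)
  else 0

private lemma cobweb_telescope (F : ℕ → ℕ) (a : ℕ) :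
    ∀ b, a < b →
      1 + ((-1 : ℤ) ^ (b - a) * ∏ i ∈ Finset.Ico (a+1) b, ((F i : ℤ) - 1))
        + ∑ k ∈ Finset.Ico (a+1) b,
            (F k : ℤ) * ((-1 : ℤ) ^ (k - a) * ∏ i ∈ Finset.Ico (a+1) k, ((F i : ℤ) - 1)) = 0 := by
  intro b hb
  induction b, hb using Nat.le_induction with
  | base =>
      simp [Nat.succ_sub (le_refl a)]
  | succ n hn ih =>
      have h1 : a + 1 ≤ n := hn
      rw [Finset.sum_Ico_succ_top h1]
      have hpow : (-1 : ℤ) ^ (n + 1 - a) = -(-1 : ℤ) ^ (n - a) := by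
        rw [Nat.succ_sub (by omega : a ≤ n), pow_succ]; ring
      rw [Finset.prod_Ico_succ_top h1, hpow]
      linear_combination ih

/-- In a cobweb poset, the function `cobwebMu` is the convolution inverse of the
zeta function of the incidence algebra: `∑_{x ≤ z ≤ y} μ(x,z) = [x = y]`. -/
theorem cobweb_mu_inverse_zeta {α : Type*} [PartialOrder α] [LocallyFiniteOrder α]
    [DecidableEq α]
    (F : ℕ → ℕ) (hF : ∀ k, 0 < F k)
    (lvl : α → ℕ) (Φ : ℕ → Finset α)
    (hord : ∀ x y : α, x < y ↔ lvl x < lvl y)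
    (hΦ : ∀ (k : ℕ) (x : α), x ∈ Φ k ↔ lvl x = k)
    (hcard : ∀ k : ℕ, (Φ k).card = F k)
    (x y : α) (hxy : x ≤ y) :
    ∑ z ∈ Finset.Icc x y, cobwebMu F lvl x z = if x = y then 1 else 0 := by
  rcases eq_or_lt_of_le hxy with rfl | hlt
  · simp [cobwebMu]
  · have hne : x ≠ y := ne_of_lt hlt
    rw [if_neg hne]
    have hab : lvl x < lvl y := (hord x y).1 hlt
    set a := lvl x with ha
    set b := lvl y with hbdef
    have hIcc : Finset.Icc x y =
        insert x (insert y ((Finset.Ico (a+1) b).biUnion Φ)) := by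
      ext z
      simp only [Finset.mem_Icc, Finset.mem_insert, Finset.mem_biUnion, Finset.mem_Ico]
      constructor
      · rintro ⟨hxz, hzy⟩
        rcases eq_or_lt_of_le hxz with rfl | h1
        · exact Or.inl rfl
        rcases eq_or_lt_of_le hzy with rfl | h2
        · exact Or.inr (Or.inl rfl)
        exact Or.inr (Or.inr ⟨lvl z, ⟨Nat.succ_le_of_lt ((hord x z).1 h1),
          (hord z y).1 h2⟩, (hΦ _ _).2 rfl⟩)
      · rintro (rfl | rfl | ⟨k, ⟨hk1, hk2⟩, hz⟩)
        · exact ⟨le_refl _, hxy⟩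
        · exact ⟨hxy, le_refl _⟩
        · have hzk : lvl z = k := (hΦ _ _).1 hz
          exact ⟨le_of_lt ((hord x z).2 (by omega)), le_of_lt ((hord z y).2 (by omega))⟩
    have hynot : y ∉ (Finset.Ico (a+1) b).biUnion Φ := by
      simp only [Finset.mem_biUnion, Finset.mem_Ico, not_exists]
      rintro k ⟨⟨hk1, hk2⟩, hyk⟩
      have : lvl y = k := (hΦ _ _).1 hyk
      omega
    have hxnot : x ∉ insert y ((Finset.Ico (a+1) b).biUnion Φ) := by
      simp only [Finset.mem_insert, Finset.mem_biUnion, Finset.mem_Ico, not_or, not_exists]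
      refine ⟨hne, ?_⟩
      rintro k ⟨⟨hk1, hk2⟩, hxk⟩
      have : lvl x = k := (hΦ _ _).1 hxk
      omega
    have hdisj : (↑(Finset.Ico (a+1) b) : Set ℕ).PairwiseDisjoint Φ := by
      intro i _ j _ hij
      refine Finset.disjoint_left.2 fun z hzi hzj => hij ?_
      rw [← (hΦ i z).1 hzi, ← (hΦ j z).1 hzj]
    rw [hIcc, Finset.sum_insert hxnot, Finset.sum_insert hynot,
      Finset.sum_biUnion hdisj]
    have hμx : cobwebMu F lvl x x = 1 := by simp [cobwebMu]
    have hμy : cobwebMu F lvl x y =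
        (-1 : ℤ) ^ (b - a) * ∏ i ∈ Finset.Ico (a+1) b, ((F i : ℤ) - 1) := by
      simp [cobwebMu, hne, ← ha, ← hbdef, hab]
    have hlevel : ∀ k ∈ Finset.Ico (a+1) b,
        ∑ z ∈ Φ k, cobwebMu F lvl x z =
          (F k : ℤ) * ((-1 : ℤ) ^ (k - a) * ∏ i ∈ Finset.Ico (a+1) k, ((F i : ℤ) - 1)) := by
      intro k hk
      rw [Finset.mem_Ico] at hk
      have : ∀ z ∈ Φ k, cobwebMu F lvl x z =
          (-1 : ℤ) ^ (k - a) * ∏ i ∈ Finset.Ico (a+1) k, ((F i : ℤ) - 1) := by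
        intro z hz
        have hzk : lvl z = k := (hΦ _ _).1 hz
        have hxz : x ≠ z := by
          intro h; rw [← h] at hzk; omega
        simp [cobwebMu, hxz, hzk, ← ha, (by omega : a < k)]
      rw [Finset.sum_congr rfl this, Finset.sum_const, hcard, nsmul_eq_mul]
    rw [Finset.sum_congr rfl hlevel, hμx, hμy]
    have := cobweb_telescope F a b hab
    linarith
end

section
/- Let κ be the cover-relation function of a cobweb poset (κ(x,y) = 1 if y covers x, else 0), and define Max = ∑_{k ≥ 0} κ^{*k} (convolution powers in the incidence algebra over ℤ; the sum is locally finite). Then for x ∈ Φ_r and y ∈ Φ_s with r < s, Max(x,y) = ∏_{i=r+1}^{s-1} F_i, which equals the number of maximal chains from x to y in the interval [x,y]. -/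
open Finset

/-- The cover-relation function `κ` of a poset: `κ(x,y) = 1` iff `y` covers `x`. -/
noncomputable def coverFn {α : Type*} [PartialOrder α] (x y : α) : ℤ :=
  by classical exact if x ⋖ y then 1 else 0

/-- Convolution powers `κ^{*k}` of the cover function in the incidence algebra
over `ℤ`. -/
noncomputable def coverPow {α : Type*} [PartialOrder α] [LocallyFiniteOrder α] :
    ℕ → α → α → ℤ
  | 0, x, y => by classical exact if x = y then 1 else 0
  | (k + 1), x, y => ∑ z ∈ Finset.Icc x y, coverFn x z * coverPow k z y


section helpers
variable {α : Type*} [PartialOrder α] (lvl : α → ℕ)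

lemma cov_iff_aux (hord : ∀ x y : α, x < y ↔ lvl x < lvl y)
    (hne : ∀ k : ℕ, ∃ z : α, lvl z = k) {x y : α} :
    x ⋖ y ↔ lvl y = lvl x + 1 := by
  constructor
  · intro h
    have h1 : lvl x < lvl y := (hord _ _).1 h.lt
    by_contra hne2
    have h2 : lvl x + 1 < lvl y := lt_of_le_of_ne h1 (Ne.symm hne2)
    obtain ⟨z, hz⟩ := hne (lvl x + 1)
    have hxz : x < z := (hord _ _).2 (by omega)
    have hzy : z < y := (hord _ _).2 (by omega)
    exact h.2 hxz hzy
  · intro h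
    refine ⟨(hord _ _).2 (by omega), fun c hc1 hc2 => ?_⟩
    have := (hord _ _).1 hc1
    have := (hord _ _).1 hc2
    omega

lemma chain_lvl (hcov : ∀ x y : α, x ⋖ y → lvl y = lvl x + 1) :
    ∀ (l : List α), l.Chain' (· ⋖ ·) → ∀ a b : α, l.head? = some a →
      l.getLast? = some b → lvl b + 1 = lvl a + l.length
  | [] => by simp
  | [a] => by
      intro _ a' b' h1 h2
      simp only [List.head?_cons, Option.some.injEq] at h1
      simp only [List.getLast?_singleton, Option.some.injEq] at h2
      subst h1; subst h2; simp
  | a :: b :: t => by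
      intro hc a' c h1 h2
      simp only [List.head?_cons, Option.some.injEq] at h1
      subst h1
      simp only [List.Chain', List.isChain_cons_cons] at hc
      have h3 : (b :: t).getLast? = some c := by
        rwa [List.getLast?_cons_cons] at h2
      have ih := chain_lvl hcov (b :: t) hc.2 b c rfl h3
      have := hcov _ _ hc.1
      simp only [List.length_cons] at ih ⊢
      omega
end helpers

section pv
variable {α : Type*} [PartialOrder α] [LocallyFiniteOrder α]

lemma powval (F : ℕ → ℕ) (lvl : α → ℕ) (Φ : ℕ → Finset α)
    (hord : ∀ x y : α, x < y ↔ lvl x < lvl y)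
    (hΦ : ∀ k x, x ∈ Φ k ↔ lvl x = k) (hcard : ∀ k, (Φ k).card = F k)
    (hcov : ∀ x y : α, x ⋖ y ↔ lvl y = lvl x + 1) :
    ∀ k (x y : α), coverPow (k+1) x y =
      if lvl y = lvl x + (k+1) then ∏ i ∈ Finset.Ico (lvl x + 1) (lvl y), (F i : ℤ) else 0 := by
  classical
  intro k
  induction k with
  | zero =>
    intro x y
    show (∑ z ∈ Finset.Icc x y, coverFn x z * coverPow 0 z y) = _
    have step : ∀ z ∈ Finset.Icc x y, coverFn x z * coverPow 0 z y
        = if z = y then coverFn x z else 0 := by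
      intro z _
      simp only [coverPow]
      split <;> simp
    rw [Finset.sum_congr rfl step, Finset.sum_ite_eq' (Finset.Icc x y) y (coverFn x)]
    by_cases h : lvl y = lvl x + 1
    · have hxy : x < y := (hord _ _).2 (by omega)
      rw [if_pos h, if_pos (Finset.mem_Icc.2 ⟨le_of_lt hxy, le_refl y⟩)]
      have hc : x ⋖ y := (hcov _ _).2 h
      simp [coverFn, hc, h]
    · have hc : ¬ x ⋖ y := fun hc => h ((hcov _ _).1 hc)
      simp [coverFn, hc, h]
  | succ k ih =>
    intro x y
    show (∑ z ∈ Finset.Icc x y, coverFn x z * coverPow (k+1) z y) = _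
    by_cases h : lvl y = lvl x + (k+2)
    · rw [if_pos h]
      have hsub : Φ (lvl x + 1) ⊆ Finset.Icc x y := by
        intro z hz
        have hz' : lvl z = lvl x + 1 := (hΦ _ _).1 hz
        exact Finset.mem_Icc.2 ⟨le_of_lt ((hord _ _).2 (by omega)),
          le_of_lt ((hord _ _).2 (by omega))⟩
      rw [← Finset.sum_subset hsub ?van]
      case van =>
        intro z hzIcc hznot
        by_cases hc : x ⋖ z
        · exact absurd ((hΦ _ _).2 ((hcov _ _).1 hc)) hznot
        · simp [coverFn, hc]
      have step : ∀ z ∈ Φ (lvl x + 1), coverFn x z * coverPow (k+1) z y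
          = ∏ i ∈ Finset.Ico (lvl x + 1 + 1) (lvl y), (F i : ℤ) := by
        intro z hz
        have hz' : lvl z = lvl x + 1 := (hΦ _ _).1 hz
        have hc : x ⋖ z := (hcov _ _).2 (by omega)
        rw [ih z y, if_pos (by omega)]
        simp [coverFn, hc, hz']
      rw [Finset.sum_congr rfl step, Finset.sum_const, hcard, nsmul_eq_mul,
        Finset.prod_eq_prod_Ico_succ_bot (by omega : lvl x + 1 < lvl y)]
    · rw [if_neg h]
      apply Finset.sum_eq_zero
      intro z hz
      by_cases hc : x ⋖ z
      · have hz' := (hcov _ _).1 hc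
        rw [ih, if_neg (by omega)]; ring
      · simp [coverFn, hc]
end pv

section ch
variable {α : Type*} [PartialOrder α]

lemma chains_count (F : ℕ → ℕ) (lvl : α → ℕ) (Φ : ℕ → Finset α)
    (hΦ : ∀ (k : ℕ) (x : α), x ∈ Φ k ↔ lvl x = k) (hcard : ∀ k, (Φ k).card = F k)
    (hcov : ∀ x y : α, x ⋖ y ↔ lvl y = lvl x + 1) :
    ∀ (d : ℕ) (x y : α), lvl y = lvl x + (d+1) →
      ({l : List α | l.Chain' (· ⋖ ·) ∧ l.head? = some x ∧ l.getLast? = some y}).Finite ∧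
      ({l : List α | l.Chain' (· ⋖ ·) ∧ l.head? = some x ∧ l.getLast? = some y}).ncard
        = ∏ i ∈ Finset.Ico (lvl x + 1) (lvl y), F i := by
  classical
  have hcov' : ∀ x y : α, x ⋖ y → lvl y = lvl x + 1 := fun x y h => (hcov x y).1 h
  intro d
  induction d with
  | zero =>
    intro x y h
    have hset : {l : List α | l.Chain' (· ⋖ ·) ∧ l.head? = some x ∧ l.getLast? = some y}
        = {[x, y]} := by
      ext l
      simp only [Set.mem_setOf_eq, Set.mem_singleton_iff]
      constructor
      · rintro ⟨hc, hh, hl⟩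
        cases l with
        | nil => simp at hh
        | cons a t =>
          simp only [List.head?_cons, Option.some.injEq] at hh
          subst hh
          cases t with
          | nil =>
            simp only [List.getLast?_singleton, Option.some.injEq] at hl
            subst hl
            exact absurd h (by omega)
          | cons b t' =>
            simp only [List.Chain', List.isChain_cons_cons] at hc
            have hb : lvl b = lvl a + 1 := hcov' _ _ hc.1
            rw [List.getLast?_cons_cons] at hl
            have hcl := chain_lvl lvl hcov' (b :: t') hc.2 b y rfl hl
            have ht' : t'.length = 0 := by
              simp only [List.length_cons] at hcl; omega
            rw [List.length_eq_zero_iff] at ht'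
            subst ht'
            simp only [List.getLast?_singleton, Option.some.injEq] at hl
            subst hl; rfl
      · rintro rfl
        refine ⟨?_, rfl, rfl⟩
        simp [List.Chain', List.isChain_cons_cons, (hcov x y).2 (by omega)]
    rw [hset]
    refine ⟨Set.finite_singleton _, ?_⟩
    rw [Set.ncard_singleton, show lvl y = lvl x + 1 from h]
    simp
  | succ d ih =>
    intro x y h
    have hTfin : ∀ z, z ∈ Φ (lvl x + 1) →
        ({l : List α | l.Chain' (· ⋖ ·) ∧ l.head? = some z ∧ l.getLast? = some y}).Finite ∧
        ({l : List α | l.Chain' (· ⋖ ·) ∧ l.head? = some z ∧ l.getLast? = some y}).ncard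
          = ∏ i ∈ Finset.Ico (lvl x + 2) (lvl y), F i := by
      intro z hz
      have hz' : lvl z = lvl x + 1 := (hΦ _ _).1 hz
      have := ih z y (by omega)
      rwa [hz'] at this
    set g : α → Finset (List α) := fun z =>
      if hz : z ∈ Φ (lvl x + 1) then (hTfin z hz).1.toFinset else ∅ with hg
    have hgmem : ∀ z ∈ Φ (lvl x + 1), ∀ t : List α,
        (t ∈ g z ↔ (t.Chain' (· ⋖ ·) ∧ t.head? = some z ∧ t.getLast? = some y)) := by
      intro z hz t
      simp [hg, hz, Set.Finite.mem_toFinset]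
    have key : {l : List α | l.Chain' (· ⋖ ·) ∧ l.head? = some x ∧ l.getLast? = some y}
        = ↑((Φ (lvl x + 1)).biUnion fun z => (g z).image (List.cons x)) := by
      ext l
      simp only [Set.mem_setOf_eq, Finset.coe_biUnion, Set.mem_iUnion, Finset.mem_coe,
        Finset.mem_biUnion, Finset.mem_image]
      constructor
      · rintro ⟨hc, hh, hl⟩
        cases l with
        | nil => simp at hh
        | cons a t =>
          simp only [List.head?_cons, Option.some.injEq] at hh
          subst hh
          cases t with
          | nil =>
            simp only [List.getLast?_singleton, Option.some.injEq] at hl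
            subst hl
            exact absurd h (by omega)
          | cons b t' =>
            simp only [List.Chain', List.isChain_cons_cons] at hc
            have hb : lvl b = lvl a + 1 := hcov' _ _ hc.1
            have hbm : b ∈ Φ (lvl a + 1) := (hΦ _ _).2 hb
            rw [List.getLast?_cons_cons] at hl
            exact ⟨b, hbm, b :: t', (hgmem b hbm _).2 ⟨hc.2, rfl, hl⟩, rfl⟩
      · rintro ⟨z, hz, t, ht, rfl⟩
        obtain ⟨htc, hth, htl⟩ := (hgmem z hz t).1 ht
        have hz' : lvl z = lvl x + 1 := (hΦ _ _).1 hz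
        cases t with
        | nil => simp at hth
        | cons b t' =>
          simp only [List.head?_cons, Option.some.injEq] at hth
          subst hth
          refine ⟨?_, rfl, ?_⟩
          · simp only [List.Chain', List.isChain_cons_cons]
            exact ⟨(hcov _ _).2 (by omega), htc⟩
          · rwa [List.getLast?_cons_cons]
    rw [key]
    refine ⟨Finset.finite_toSet _, ?_⟩
    rw [Set.ncard_coe_finset, Finset.card_biUnion]
    · have step : ∀ z ∈ Φ (lvl x + 1), ((g z).image (List.cons x)).card
          = ∏ i ∈ Finset.Ico (lvl x + 2) (lvl y), F i := by
        intro z hz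
        rw [Finset.card_image_of_injective _ (fun a b hab => by injection hab)]
        have h2 := (hTfin z hz).2
        rw [← h2, hg]
        simp only [hz, dif_pos]
        exact (Set.ncard_eq_toFinset_card _ (hTfin z hz).1).symm
      rw [Finset.sum_congr rfl step, Finset.sum_const, hcard, smul_eq_mul,
        Finset.prod_eq_prod_Ico_succ_bot (by omega : lvl x + 1 < lvl y)]
    · intro z1 h1 z2 h2 hne
      simp only [Finset.disjoint_left, Finset.mem_image]
      rintro l ⟨t1, ht1, rfl⟩ ⟨t2, ht2, heq⟩
      have e : t2 = t1 := by injection heq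
      subst e
      have hh1 := ((hgmem z1 h1 _).1 ht1).2.1
      have hh2 := ((hgmem z2 h2 _).1 ht2).2.1
      rw [hh1] at hh2
      exact hne (Option.some.inj hh2)
end ch

/-- In a cobweb poset determined by `F`, the matrix `Max = ∑_{k≥0} κ^{*k}`
satisfies `Max(x,y) = ∏_{i=r+1}^{s-1} F i` for `x` of rank `r` and `y` of rank
`s > r`, and this is the number of maximal (saturated) chains from `x` to `y`. -/
theorem cobweb_max_matrix {α : Type*} [PartialOrder α] [LocallyFiniteOrder α]
    (F : ℕ → ℕ) (hF : ∀ k, 0 < F k)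
    (lvl : α → ℕ) (Φ : ℕ → Finset α)
    (hord : ∀ x y : α, x < y ↔ lvl x < lvl y)
    (hΦ : ∀ (k : ℕ) (x : α), x ∈ Φ k ↔ lvl x = k)
    (hcard : ∀ k : ℕ, (Φ k).card = F k)
    (x y : α) (r s : ℕ) (hx : lvl x = r) (hy : lvl y = s) (hrs : r < s) :
    (∑' k : ℕ, coverPow k x y) = ∏ i ∈ Finset.Ico (r + 1) s, (F i : ℤ) ∧
      (∑' k : ℕ, coverPow k x y) =
        ({l : List α | l.Chain' (· ⋖ ·) ∧ l.head? = some x ∧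
          l.getLast? = some y}.ncard : ℤ) := by
  classical
  have hne : ∀ k : ℕ, ∃ z : α, lvl z = k := by
    intro k
    obtain ⟨z, hz⟩ := Finset.card_pos.1 (by rw [hcard]; exact hF k)
    exact ⟨z, (hΦ _ _).1 hz⟩
  have hcov : ∀ a b : α, a ⋖ b ↔ lvl b = lvl a + 1 := fun a b =>
    cov_iff_aux lvl hord hne
  have htsum : (∑' k : ℕ, coverPow k x y) = coverPow (s - r) x y := by
    apply tsum_eq_single
    intro k hk
    cases k with
    | zero =>
      have hxy : x ≠ y := fun e => by rw [e, hy] at hx; omega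
      simp [coverPow, hxy]
    | succ k =>
      rw [powval F lvl Φ hord hΦ hcard hcov, if_neg (by omega)]
  have hval : coverPow (s - r) x y = ∏ i ∈ Finset.Ico (r+1) s, (F i : ℤ) := by
    obtain ⟨d, hd⟩ : ∃ d, s - r = d + 1 := ⟨s - r - 1, by omega⟩
    rw [hd, powval F lvl Φ hord hΦ hcard hcov, if_pos (by omega), hx, hy]
  refine ⟨htsum.trans hval, ?_⟩
  rw [htsum, hval]
  have h2 := (chains_count F lvl Φ hΦ hcard hcov (s - r - 1) x y (by omega)).2
  rw [hx, hy] at h2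
  rw [h2]
  push_cast
  ring
end
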